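/- For integers 0 ≤ k ≤ n and α, β > -1, ∫₀¹ x^α (1-x)^β P_{nk}^{(α,β)}(x) dx = (Γ(α+k+1)/k!) · (Γ(β+n-k+1)/(n-k)!) · (n!/Γ(α+β+n+2)). -/

import Mathlib

open Real MeasureTheory

/-- Falling factorial `(a)_m = a (a-1) ⋯ (a-m+1)` for real `a`. -/
noncomputable def ffall (a : ℝ) (m : ℕ) : ℝ := ∏ i ∈ Finset.range m, (a - i)

/-- Alternative Jacobi polynomials defined by the Rodrigues-type formula. -/
noncomputable def altJacobi (α β : ℝ) (n k : ℕ) (x : ℝ) : ℝ :=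
  x ^ (-α - k - 1 : ℝ) * (1 - x) ^ (-β : ℝ) / (n - k).factorial *
    iteratedDeriv (n - k)
      (fun y : ℝ => y ^ (α + n + k + 1 : ℝ) * (1 - y) ^ (β + n - k : ℝ)) x

open Finset

lemma ffall_zero (a : ℝ) : ffall a 0 = 1 := by simp [ffall]

lemma ffall_succ (a : ℝ) (m : ℕ) : ffall a (m + 1) = ffall a m * (a - m) := by
  simp [ffall, Finset.prod_range_succ]

/-- Chu–Vandermonde identity for real falling factorials. -/
lemma ffall_add (r s : ℝ) (m : ℕ) :
    ffall (r + s) m =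
      ∑ ij ∈ Finset.HasAntidiagonal.antidiagonal m, (m.choose ij.1 : ℝ) * (ffall r ij.1 * ffall s ij.2) := by
  induction m with
  | zero => simp [ffall_zero]
  | succ m ih =>
    rw [ffall_succ, ih,
      Finset.sum_antidiagonal_choose_succ_mul (fun i j => ffall r i * ffall s j) m,
      Finset.sum_mul, ← Finset.sum_add_distrib]
    refine Finset.sum_congr rfl fun ij hij => ?_
    rw [Finset.HasAntidiagonal.mem_antidiagonal] at hij
    have h2 : (m.choose ij.2 : ℝ) = m.choose ij.1 := by
      rw [show ij.2 = m - ij.1 by omega, Nat.choose_symm (by omega)]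
    have hj : (ij.1 : ℝ) + ij.2 = m := by exact_mod_cast hij
    rw [ffall_succ, ffall_succ, h2]
    linear_combination ((m.choose ij.1 : ℝ) * ffall r ij.1 * ffall s ij.2) * hj

lemma gamma_rise (z : ℝ) (hz : 0 < z) (l : ℕ) :
    Real.Gamma (z + l) = Real.Gamma z * ∏ t ∈ Finset.range l, (z + t) := by
  induction l with
  | zero => simp
  | succ l ih =>
    have h : z + ((l : ℕ) + 1 : ℕ) = (z + l) + 1 := by push_cast; ring
    rw [h, Real.Gamma_add_one (by positivity), ih, Finset.prod_range_succ]; ring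

lemma gamma_fall (z : ℝ) (l : ℕ) (h : 0 < z - l + 1) :
    Real.Gamma (z + 1) = ffall z l * Real.Gamma (z - l + 1) := by
  induction l with
  | zero => simp [ffall_zero]
  | succ l ih =>
    have hz1 : (0:ℝ) < z - l := by push_cast at h; linarith
    have hz : (0:ℝ) < z - l + 1 := by linarith
    rw [ih hz, ffall_succ, Real.Gamma_add_one (ne_of_gt hz1),
      show z - ((l:ℕ)+1:ℕ) + 1 = z - l by push_cast; ring]
    ring

lemma ffall_nat (n m : ℕ) (h : m ≤ n) : ffall (n : ℝ) m = (n.descFactorial m : ℝ) := by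
  induction m with
  | zero => simp [ffall_zero]
  | succ m ih =>
    rw [ffall_succ, ih (by omega), Nat.descFactorial_succ, Nat.cast_mul,
      Nat.cast_sub (by omega)]
    ring

lemma rbeta_eqOn (p q : ℝ) :
    ∀ x ∈ Set.Icc (0:ℝ) 1,
      (x : ℂ) ^ (((p+1:ℝ):ℂ) - 1) * (1 - (x : ℂ)) ^ (((q+1:ℝ):ℂ) - 1)
        = ((x ^ p * (1 - x) ^ q : ℝ) : ℂ) := by
  intro x hx
  have h1 : ((p+1:ℝ):ℂ) - 1 = ((p:ℝ):ℂ) := by push_cast; ring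
  have h2 : ((q+1:ℝ):ℂ) - 1 = ((q:ℝ):ℂ) := by push_cast; ring
  rw [h1, h2, ← Complex.ofReal_one, ← Complex.ofReal_sub,
    ← Complex.ofReal_cpow hx.1, ← Complex.ofReal_cpow (by linarith [hx.2]),
    ← Complex.ofReal_mul]

lemma rbeta_int (p q : ℝ) (hp : -1 < p) (hq : -1 < q) :
    IntervalIntegrable (fun x : ℝ => x ^ p * (1 - x) ^ q) volume 0 1 := by
  have hC := Complex.betaIntegral_convergent (u := ((p+1:ℝ):ℂ)) (v := ((q+1:ℝ):ℂ))
    (by simpa using by linarith) (by simpa using by linarith)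
  rw [intervalIntegrable_iff] at hC ⊢
  have hC2 : IntegrableOn (fun x : ℝ => ((x ^ p * (1 - x) ^ q : ℝ) : ℂ))
      (Set.uIoc (0:ℝ) 1) volume := by
    refine hC.congr_fun (fun x hx => rbeta_eqOn p q x ?_) measurableSet_uIoc
    rw [Set.uIoc_of_le zero_le_one] at hx
    exact ⟨le_of_lt hx.1, hx.2⟩
  simpa [IntegrableOn] using hC2.re

lemma rbeta_val (p q : ℝ) (hp : -1 < p) (hq : -1 < q) :
    ∫ x in (0:ℝ)..1, x ^ p * (1 - x) ^ q
      = Real.Gamma (p + 1) * Real.Gamma (q + 1) / Real.Gamma (p + q + 2) := by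
  have hbeta : Complex.betaIntegral ((p+1:ℝ):ℂ) ((q+1:ℝ):ℂ)
      = ((∫ x in (0:ℝ)..1, x ^ p * (1 - x) ^ q : ℝ) : ℂ) := by
    rw [Complex.betaIntegral, ← intervalIntegral.integral_ofReal]
    refine intervalIntegral.integral_congr fun x hx => ?_
    exact rbeta_eqOn p q x (by rwa [Set.uIcc_of_le zero_le_one] at hx)
  have hG := Complex.Gamma_mul_Gamma_eq_betaIntegral
    (s := ((p+1:ℝ):ℂ)) (t := ((q+1:ℝ):ℂ)) (by simpa using by linarith) (by simpa using by linarith)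
  rw [hbeta, show ((p+1:ℝ):ℂ) + ((q+1:ℝ):ℂ) = ((p+q+2:ℝ):ℂ) by push_cast; ring] at hG
  rw [Complex.Gamma_ofReal, Complex.Gamma_ofReal, Complex.Gamma_ofReal,
    ← Complex.ofReal_mul, ← Complex.ofReal_mul] at hG
  have hreal : Real.Gamma (p+1) * Real.Gamma (q+1)
      = Real.Gamma (p+q+2) * ∫ x in (0:ℝ)..1, x ^ p * (1 - x) ^ q :=
    Complex.ofReal_inj.mp hG
  have hne : Real.Gamma (p+q+2) ≠ 0 := ne_of_gt (Real.Gamma_pos_of_pos (by linarith))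
  field_simp
  linarith [hreal]

lemma iterDeriv_formula (a b : ℝ) (m : ℕ) :
    ∀ x ∈ Set.Ioo (0:ℝ) 1,
    iteratedDeriv m (fun y : ℝ => y ^ a * (1 - y) ^ b) x
      = ∑ ij ∈ Finset.HasAntidiagonal.antidiagonal m, (m.choose ij.1 : ℝ) *
          (ffall a ij.1 * ((-1) ^ ij.2 * ffall b ij.2) *
            (x ^ (a - ij.1) * (1 - x) ^ (b - ij.2))) := by
  induction m with
  | zero => intro x _; simp [ffall_zero]
  | succ m ih =>
    intro x hx
    rw [iteratedDeriv_succ]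
    have hEv : iteratedDeriv m (fun y : ℝ => y ^ a * (1 - y) ^ b) =ᶠ[nhds x]
        (fun z : ℝ => ∑ ij ∈ Finset.HasAntidiagonal.antidiagonal m, (m.choose ij.1 : ℝ) *
          (ffall a ij.1 * ((-1) ^ ij.2 * ffall b ij.2) *
            (z ^ (a - ij.1) * (1 - z) ^ (b - ij.2)))) := by
      filter_upwards [isOpen_Ioo.mem_nhds hx] with z hz using ih z hz
    rw [hEv.deriv_eq]
    have hx0 : x ≠ 0 := ne_of_gt hx.1
    have hx1 : (1 : ℝ) - x ≠ 0 := by have := hx.2; intro h; linarith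
    have hD : ∀ ij ∈ Finset.HasAntidiagonal.antidiagonal m, HasDerivAt
        (fun z : ℝ => (m.choose ij.1 : ℝ) *
          (ffall a ij.1 * ((-1) ^ ij.2 * ffall b ij.2) *
            (z ^ (a - ij.1) * (1 - z) ^ (b - ij.2))))
        ((m.choose ij.1 : ℝ) *
          (ffall a ij.1 * ((-1) ^ ij.2 * ffall b ij.2) *
            ((a - ij.1) * x ^ (a - ij.1 - 1) * (1 - x) ^ (b - ij.2)
              + x ^ (a - ij.1) * (-1 * (b - ij.2) * (1 - x) ^ (b - ij.2 - 1))))) x := by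
      intro ij _
      have h1 : HasDerivAt (fun z : ℝ => z ^ (a - ij.1))
          ((a - ij.1) * x ^ (a - ij.1 - 1)) x :=
        Real.hasDerivAt_rpow_const (Or.inl hx0)
      have h2 : HasDerivAt (fun z : ℝ => (1 - z) ^ (b - ij.2))
          (-1 * (b - ij.2) * (1 - x) ^ (b - ij.2 - 1)) x := by
        have := ((hasDerivAt_id x).const_sub 1).rpow_const (p := b - ij.2) (Or.inl hx1)
        simpa using this
      exact ((h1.mul h2).const_mul _).const_mul _
    rw [(HasDerivAt.fun_sum hD).deriv,
      Finset.sum_antidiagonal_choose_succ_mul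
        (fun i j => ffall a i * ((-1) ^ j * ffall b j) *
          (x ^ (a - i) * (1 - x) ^ (b - j))) m]
    have hsymm : ∀ ij ∈ Finset.HasAntidiagonal.antidiagonal m,
        (m.choose ij.2 : ℝ) * (ffall a (ij.1+1) * ((-1) ^ ij.2 * ffall b ij.2) *
          (x ^ (a - (ij.1+1 : ℕ)) * (1 - x) ^ (b - ij.2)))
        = (m.choose ij.1 : ℝ) * (ffall a (ij.1+1) * ((-1) ^ ij.2 * ffall b ij.2) *
          (x ^ (a - (ij.1+1 : ℕ)) * (1 - x) ^ (b - ij.2))) := by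
      intro ij hij
      rw [Finset.HasAntidiagonal.mem_antidiagonal] at hij
      rw [show ij.2 = m - ij.1 by omega, Nat.choose_symm (by omega)]
    rw [Finset.sum_congr rfl hsymm, ← Finset.sum_add_distrib]
    refine Finset.sum_congr rfl fun ij hij => ?_
    have e1 : a - ((ij.1 + 1 : ℕ) : ℝ) = a - ij.1 - 1 := by push_cast; ring
    have e2 : b - ((ij.2 + 1 : ℕ) : ℝ) = b - ij.2 - 1 := by push_cast; ring
    rw [e1, e2, ffall_succ, ffall_succ, pow_succ]
    ring

theorem stmt_6 (n k : ℕ) (hk : k ≤ n) (α β : ℝ) (hα : α > -1) (hβ : β > -1) :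
    ∫ x in (0 : ℝ)..1, x ^ α * (1 - x) ^ β * altJacobi α β n k x =
      (Real.Gamma (α + k + 1) / k.factorial) *
        (Real.Gamma (β + n - k + 1) / (n - k).factorial) *
        (n.factorial / Real.Gamma (α + β + n + 2)) := by
  set m := n - k with hm
  set a : ℝ := α + n + k + 1 with ha
  set b : ℝ := β + n - k with hb
  have hmn : m ≤ n := by omega
  have hcm : (m : ℝ) = (n : ℝ) - k := by rw [hm, Nat.cast_sub hk]
  have hbm : b = β + m := by rw [hb, hcm]; ring
  -- coefficients
  set C : ℕ × ℕ → ℝ := fun ij => (m.choose ij.1 : ℝ) *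
      (ffall a ij.1 * ((-1) ^ ij.2 * ffall b ij.2)) / m.factorial with hC
  -- pointwise identity on (0,1)
  have key : ∀ x ∈ Set.Ioo (0:ℝ) 1,
      x ^ α * (1 - x) ^ β * altJacobi α β n k x
        = ∑ ij ∈ Finset.HasAntidiagonal.antidiagonal m,
            C ij * (x ^ (α + n - ij.1) * (1 - x) ^ (β + m - ij.2)) := by
    intro x hx
    have hx0 : (0:ℝ) < x := hx.1
    have hx1 : (0:ℝ) < 1 - x := by have := hx.2; linarith
    rw [show altJacobi α β n k x = x ^ (-α - k - 1 : ℝ) * (1 - x) ^ (-β : ℝ) / m.factorial *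
        iteratedDeriv m (fun y : ℝ => y ^ a * (1 - y) ^ b) x from rfl,
      iterDeriv_formula a b m x hx]
    simp only [Finset.mul_sum]
    refine Finset.sum_congr rfl fun ij hij => ?_
    have h1 : x ^ (α + (n:ℝ) - ij.1) = x ^ α * x ^ (-α - k - 1 : ℝ) * x ^ (a - ij.1) := by
      rw [← Real.rpow_add hx0, ← Real.rpow_add hx0]
      congr 1
      rw [ha]; ring
    have h2 : (1 - x) ^ (β + (m:ℝ) - ij.2)
        = (1 - x) ^ β * (1 - x) ^ (-β : ℝ) * (1 - x) ^ (b - ij.2) := by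
      rw [← Real.rpow_add hx1, ← Real.rpow_add hx1]
      congr 1
      rw [hbm]; ring
    rw [h1, h2, hC]
    ring
  -- replace integrand a.e.
  have hone : ∀ᵐ x : ℝ ∂volume, x ≠ 1 := by
    rw [MeasureTheory.ae_iff]
    simp only [ne_eq, not_not, Set.setOf_eq_eq_singleton]
    exact measure_singleton 1
  have hcongr : ∫ x in (0:ℝ)..1, x ^ α * (1 - x) ^ β * altJacobi α β n k x
      = ∫ x in (0:ℝ)..1, ∑ ij ∈ Finset.HasAntidiagonal.antidiagonal m,
          C ij * (x ^ (α + n - ij.1) * (1 - x) ^ (β + m - ij.2)) := by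
    refine intervalIntegral.integral_congr_ae ?_
    filter_upwards [hone] with x hx1 hmem
    rw [Set.uIoc_of_le zero_le_one] at hmem
    exact key x ⟨hmem.1, lt_of_le_of_ne hmem.2 hx1⟩
  have hexp1 : ∀ ij ∈ Finset.HasAntidiagonal.antidiagonal m, (-1:ℝ) < α + n - ij.1 := by
    intro ij hij
    rw [Finset.HasAntidiagonal.mem_antidiagonal] at hij
    have h' : ij.1 ≤ n := by omega
    have : (ij.1 : ℝ) ≤ n := by exact_mod_cast h'
    linarith
  have hexp2 : ∀ ij ∈ Finset.HasAntidiagonal.antidiagonal m, (-1:ℝ) < β + m - ij.2 := by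
    intro ij hij
    rw [Finset.HasAntidiagonal.mem_antidiagonal] at hij
    have : (ij.2 : ℝ) ≤ m := by exact_mod_cast (by omega : ij.2 ≤ m)
    linarith
  rw [hcongr, intervalIntegral.integral_finset_sum (fun ij hij =>
    ((rbeta_int _ _ (hexp1 ij hij) (hexp2 ij hij)).const_mul (C ij)))]
  simp only [intervalIntegral.integral_const_mul]
  -- evaluate each integral and massage terms
  have hterm : ∀ ij ∈ Finset.HasAntidiagonal.antidiagonal m,
      C ij * ∫ x in (0:ℝ)..1, x ^ (α + n - ij.1) * (1 - x) ^ (β + m - ij.2)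
        = ((m.choose ij.1 : ℝ) * (ffall a ij.1 * ffall (-α - k - 1) ij.2)) *
            (Real.Gamma (α + k + 1) * Real.Gamma (β + m + 1)
              / (m.factorial * Real.Gamma (α + β + n + 2))) := by
    intro ij hij
    rw [Finset.HasAntidiagonal.mem_antidiagonal] at hij
    have hij1 : (ij.1 : ℝ) + ij.2 = m := by exact_mod_cast hij
    rw [rbeta_val _ _ (hexp1 ij (Finset.HasAntidiagonal.mem_antidiagonal.mpr hij))
      (hexp2 ij (Finset.HasAntidiagonal.mem_antidiagonal.mpr hij))]
    have hden : α + ↑n - ↑ij.1 + (β + ↑m - ↑ij.2) + 2 = α + β + n + 2 := by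
      rw [hcm] at hij1 ⊢; linarith
    have hGa : Real.Gamma (α + ↑n - ↑ij.1 + 1)
        = Real.Gamma (α + k + 1) * ∏ t ∈ Finset.range ij.2, (α + k + 1 + t) := by
      have harg : α + ↑n - ↑ij.1 + 1 = (α + k + 1) + (ij.2 : ℝ) := by
        have hn' : (n : ℝ) = k + m := by rw [hcm]; ring
        rw [hn']; linarith
      rw [harg, gamma_rise (α + k + 1) (by
        have : (0:ℝ) ≤ k := Nat.cast_nonneg k
        linarith) ij.2]
    have hsign : ((-1:ℝ)) ^ ij.2 * ∏ t ∈ Finset.range ij.2, (α + k + 1 + t)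
        = ffall (-α - k - 1) ij.2 := by
      have h1 : ∀ t ∈ Finset.range ij.2, -α - (k:ℝ) - 1 - (t:ℕ) = (-1) * (α + k + 1 + t) :=
        fun t _ => by ring
      simp only [ffall]
      rw [Finset.prod_congr rfl h1, Finset.prod_mul_distrib, Finset.prod_const,
        Finset.card_range]
    have hGb : ffall b ij.2 * Real.Gamma (β + ↑m - ↑ij.2 + 1) = Real.Gamma (β + m + 1) := by
      have := gamma_fall (β + m) ij.2 (by
        have : (ij.2 : ℝ) ≤ m := by exact_mod_cast (by omega : ij.2 ≤ m)
        linarith)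
      rw [hbm, this]
    rw [hden, hGa, hC]
    rw [← hGb, ← hsign]
    ring
  rw [Finset.sum_congr rfl hterm, ← Finset.sum_mul]
  have hvan : ∑ ij ∈ Finset.HasAntidiagonal.antidiagonal m,
      (m.choose ij.1 : ℝ) * (ffall a ij.1 * ffall (-α - k - 1) ij.2)
        = (n.descFactorial m : ℝ) := by
    rw [← ffall_add, show a + (-α - k - 1) = (n : ℝ) by rw [ha]; ring, ffall_nat n m hmn]
  rw [hvan]
  have hfac : (k.factorial : ℝ) * n.descFactorial m = n.factorial := by
    exact_mod_cast congrArg (Nat.cast : ℕ → ℝ)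
      (by rw [show k = n - m by omega]; exact Nat.factorial_mul_descFactorial hmn)
  have hΓne : Real.Gamma (α + β + n + 2) ≠ 0 :=
    ne_of_gt (Real.Gamma_pos_of_pos (by
      have : (0:ℝ) ≤ n := Nat.cast_nonneg n
      linarith))
  have hkne : (k.factorial : ℝ) ≠ 0 := by positivity
  have hmne : (m.factorial : ℝ) ≠ 0 := by positivity
  rw [hbm]
  have hdf : (n.descFactorial m : ℝ) = n.factorial / k.factorial := by
    rw [eq_div_iff hkne]; linear_combination hfac
  rw [hdf]
  field_simp
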